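/- For an item j of a TBPP instance, let γ(j) be the set of items k ≠ j that are active at some time at which j is also active, and let σ(j) = max{ Σ_{k∈A} w_k : A ⊆ γ(j), Σ_{k∈A} w_k ≤ W − w_j } be the optimal value of the associated Subset Sum Problem. Define lifted weights w′ by w′_j = W − σ(j) and w′_k = w_k for k ≠ j. Then w′_j ≥ w_j, and an assignment f of items to bins is feasible for the instance with weights w if and only if it is feasible for the instance with weights w′. In particular the lifted instance has the same optimal number of bins as the original one. -/
import Mathlib


open Finset

/-- A TBPP assignment `f` is feasible for weights `w`: at every time instant and for
every bin, the total weight of the items assigned to that bin that are active at that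
time is at most `W`. -/
def TBPPFeasible {n : ℕ} {I : Type*} [DecidableEq I]
    (W : ℤ) (w : Fin n → ℤ) (s t : Fin n → ℕ) (f : Fin n → I) : Prop :=
  ∀ τ : ℕ, ∀ i : I,
    ∑ k ∈ univ.filter (fun k => f k = i ∧ s k ≤ τ ∧ τ < t k), w k ≤ W


private lemma tbpp_lift1_aux
    {n : ℕ} {J : Type*} [DecidableEq J]
    (W : ℤ) (w : Fin n → ℤ) (s t : Fin n → ℕ)
    (j : Fin n) (γ : Finset (Fin n))
    (hγ : ∀ k, k ∈ γ ↔
        (k ≠ j ∧ ∃ τ : ℕ, (s k ≤ τ ∧ τ < t k) ∧ (s j ≤ τ ∧ τ < t j)))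
    (σ : ℤ)
    (hub : ∀ v ∈ {v : ℤ | ∃ A : Finset (Fin n), A ⊆ γ ∧ v = ∑ k ∈ A, w k ∧ v ≤ W - w j}, v ≤ σ)
    (hwj : w j ≤ W - σ)
    (f : Fin n → J) :
    TBPPFeasible W w s t f ↔ TBPPFeasible W (Function.update w j (W - σ)) s t f := by
  constructor
  · intro hf τ i
    set S := univ.filter (fun k => f k = i ∧ s k ≤ τ ∧ τ < t k) with hS
    by_cases hj : j ∈ S
    · have hjprop : f j = i ∧ s j ≤ τ ∧ τ < t j := by
        simpa [hS] using hj
      have hsub : S.erase j ⊆ γ := by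
        intro k hk
        rw [hγ]
        obtain ⟨hkj, hkS⟩ := Finset.mem_erase.mp hk
        simp only [hS, mem_filter, mem_univ, true_and] at hkS
        exact ⟨hkj, τ, ⟨hkS.2.1, hkS.2.2⟩, hjprop.2⟩
      have hsplit : ∑ k ∈ S.erase j, w k + w j = ∑ k ∈ S, w k :=
        Finset.sum_erase_add S w hj
      have hfS : ∑ k ∈ S, w k ≤ W := hf τ i
      have hmem : ∑ k ∈ S.erase j, w k ≤ σ :=
        hub _ ⟨S.erase j, hsub, rfl, by linarith⟩
      have hsplit' : ∑ k ∈ S.erase j, Function.update w j (W - σ) k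
          + Function.update w j (W - σ) j = ∑ k ∈ S, Function.update w j (W - σ) k :=
        Finset.sum_erase_add S _ hj
      have heq : ∑ k ∈ S.erase j, Function.update w j (W - σ) k
          = ∑ k ∈ S.erase j, w k := by
        refine Finset.sum_congr rfl fun k hk => ?_
        exact Function.update_of_ne (Finset.mem_erase.mp hk).1 _ _
      rw [← hsplit', heq, Function.update_self]
      linarith
    · have heq : ∑ k ∈ S, Function.update w j (W - σ) k = ∑ k ∈ S, w k := by
        refine Finset.sum_congr rfl fun k hk => ?_
        exact Function.update_of_ne (by rintro rfl; exact hj hk) _ _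
      rw [heq]; exact hf τ i
  · intro hf τ i
    refine le_trans (Finset.sum_le_sum fun k _ => ?_) (hf τ i)
    by_cases hk : k = j
    · subst hk; rw [Function.update_self]; exact hwj
    · rw [Function.update_of_ne hk]

/-- Lift-1: let `γ` be the set of items `k ≠ j` active at some time at
which `j` is active, and let `σ` be the optimum of the associated Subset Sum Problem.
Lifting the weight of `j` to `W - σ` does not decrease it and preserves feasibility of
every assignment, hence also the optimal number of bins. -/
theorem tbpp_lift1
    {n : ℕ} {I : Type*} [DecidableEq I]
    (W : ℤ) (hW : 0 < W)
    (w : Fin n → ℤ) (hw : ∀ j, 0 < w j ∧ w j ≤ W)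
    (s t : Fin n → ℕ) (hst : ∀ j, s j < t j)
    (j : Fin n) (γ : Finset (Fin n))
    (hγ : ∀ k, k ∈ γ ↔
        (k ≠ j ∧ ∃ τ : ℕ, (s k ≤ τ ∧ τ < t k) ∧ (s j ≤ τ ∧ τ < t j)))
    (σ : ℤ)
    (hσ : IsGreatest
        {v : ℤ | ∃ A : Finset (Fin n), A ⊆ γ ∧ v = ∑ k ∈ A, w k ∧ v ≤ W - w j} σ) :
    w j ≤ W - σ ∧
    (∀ f : Fin n → I,
        TBPPFeasible W w s t f ↔ TBPPFeasible W (Function.update w j (W - σ)) s t f) ∧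
    (∀ m : ℕ,
        (∃ f : Fin n → Fin m, TBPPFeasible W w s t f) ↔
        (∃ f : Fin n → Fin m, TBPPFeasible W (Function.update w j (W - σ)) s t f)) := by
  obtain ⟨⟨A₀, hA₀, hv₀, hle₀⟩, hub⟩ := hσ
  have hwj : w j ≤ W - σ := by linarith
  exact ⟨hwj, fun f => tbpp_lift1_aux W w s t j γ hγ σ hub hwj f,
    fun m => exists_congr fun f => tbpp_lift1_aux W w s t j γ hγ σ hub hwj f⟩
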